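/- Let p ∈ (1,∞), let s : {1,2,...} → ℕ satisfy s_k ≥ 1, and let σ : {1,2,...} → ℝ satisfy σ_k > 0. Then the infimum defining M_p(σ,s) is attained — i.e., there exists ρ : {1,2,...} → [0,∞) with Σ_{k≥1} ρ_k ≥ 1 and Σ_{k≥1} s_k σ_k ρ_k^p = M_p(σ,s) — if and only if M_p(σ,s) > 0. -/

import Mathlib

open scoped ENNReal NNReal

open MeasureTheory in
/-- Hölder's inequality for `tsum` over `ℕ` with `ℝ≥0∞` values. -/
private lemma holder_tsum {p q : ℝ} (hpq : p.HolderConjugate q) (f g : ℕ → ℝ≥0∞) :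
    (∑' k, f k * g k) ≤ (∑' k, f k ^ p) ^ (1 / p) * (∑' k, g k ^ q) ^ (1 / q) := by
  have h := ENNReal.lintegral_mul_le_Lp_mul_Lq (Measure.count : Measure ℕ) hpq
    (measurable_from_nat (f := f)).aemeasurable (measurable_from_nat (f := g)).aemeasurable
  simpa [MeasureTheory.lintegral_count] using h

/-- Given a "density" `b` satisfying the self-reproducing identity `w k * b k ^ p = b k`
with finite nonzero total mass `T`, the normalized density `b / T` is admissible and has
energy `T ^ (1 - p)`. -/
private lemma construct_aux {p : ℝ} (hp : 0 < p) (w b : ℕ → ℝ≥0∞)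
    (hwb : ∀ k, w k * b k ^ p = b k) (hbt : ∀ k, b k ≠ ⊤)
    (hT0 : (∑' k, b k) ≠ 0) (hTt : (∑' k, b k) ≠ ⊤) :
    ∃ ρ : ℕ → ℝ≥0, 1 ≤ (∑' k : ℕ, (ρ k : ℝ≥0∞)) ∧
      (∑' k : ℕ, w k * (ρ k : ℝ≥0∞) ^ p) = (∑' k, b k) ^ (1 - p) := by
  set T : ℝ≥0∞ := ∑' k, b k with hT
  refine ⟨fun k => (b k / T).toNNReal, ?_, ?_⟩
  · have hco : ∀ k, ((b k / T).toNNReal : ℝ≥0∞) = b k / T := fun k =>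
      ENNReal.coe_toNNReal (ENNReal.div_lt_top (hbt k) hT0).ne
    have : (∑' k : ℕ, ((b k / T).toNNReal : ℝ≥0∞)) = 1 := by
      simp_rw [hco, div_eq_mul_inv, ENNReal.tsum_mul_right, ← hT,
        ← div_eq_mul_inv, ENNReal.div_self hT0 hTt]
    rw [this]
  · have hco : ∀ k, ((b k / T).toNNReal : ℝ≥0∞) = b k / T := fun k =>
      ENNReal.coe_toNNReal (ENNReal.div_lt_top (hbt k) hT0).ne
    have hterm : ∀ k, w k * ((b k / T).toNNReal : ℝ≥0∞) ^ p = b k * (T ^ p)⁻¹ := by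
      intro k
      rw [hco k, ENNReal.div_rpow_of_nonneg _ _ hp.le, div_eq_mul_inv, ← mul_assoc, hwb k]
    simp_rw [hterm]
    rw [ENNReal.tsum_mul_right, ← hT, ← div_eq_mul_inv,
      ENNReal.rpow_sub 1 p hT0 hTt, ENNReal.rpow_one]

/-- Hölder lower bound: any admissible density has energy at least `S ^ (1 - p)`,
where `S = ∑ w k ^ (-(p-1)⁻¹)`. -/
private lemma lower_bound {p : ℝ} (hp : 1 < p) (w : ℕ → ℝ≥0∞)
    (hw0 : ∀ k, w k ≠ 0) (hwt : ∀ k, w k ≠ ⊤)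
    (hS0 : (∑' k, w k ^ (-(p - 1)⁻¹)) ≠ 0) (hSt : (∑' k, w k ^ (-(p - 1)⁻¹)) ≠ ⊤)
    (f : ℕ → ℝ≥0∞) (hf : 1 ≤ ∑' k, f k) :
    (∑' k, w k ^ (-(p - 1)⁻¹)) ^ (1 - p) ≤ ∑' k, w k * f k ^ p := by
  have hp0 : (0 : ℝ) < p := by linarith
  have hp1 : p - 1 ≠ 0 := by intro h; nlinarith
  have hpne : p ≠ 0 := by positivity
  set q : ℝ := p / (p - 1) with hq
  have hpq : p.HolderConjugate q := Real.HolderConjugate.conjExponent hp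
  have hq0 : (0 : ℝ) < q := hpq.symm.pos
  set S : ℝ≥0∞ := ∑' k, w k ^ (-(p - 1)⁻¹) with hS
  set E : ℝ≥0∞ := ∑' k, w k * f k ^ p with hE
  -- Hölder with F k = w k ^ (1/p) * f k and G k = w k ^ (-1/p)
  have key : (1 : ℝ≥0∞) ≤ E ^ (1 / p) * S ^ (1 / q) := by
    have h1 : ∀ k, f k = (w k ^ (1 / p) * f k) * (w k ^ (-(1 / p))) := by
      intro k
      rw [mul_comm (w k ^ (1 / p)) (f k), mul_assoc,
        ← ENNReal.rpow_add _ _ (hw0 k) (hwt k)]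
      simp
    have h2 : ∀ k, (w k ^ (1 / p) * f k) ^ p = w k * f k ^ p := by
      intro k
      rw [ENNReal.mul_rpow_of_nonneg _ _ hp0.le, ← ENNReal.rpow_mul]
      rw [show (1 / p) * p = 1 by field_simp, ENNReal.rpow_one]
    have h3 : ∀ k, (w k ^ (-(1 / p))) ^ q = w k ^ (-(p - 1)⁻¹) := by
      intro k
      rw [← ENNReal.rpow_mul]
      congr 1
      rw [hq]
      field_simp
    calc (1 : ℝ≥0∞) ≤ ∑' k, f k := hf
      _ = ∑' k, (w k ^ (1 / p) * f k) * (w k ^ (-(1 / p))) := by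
          exact tsum_congr h1
      _ ≤ (∑' k, (w k ^ (1 / p) * f k) ^ p) ^ (1 / p) *
            (∑' k, (w k ^ (-(1 / p))) ^ q) ^ (1 / q) := holder_tsum hpq _ _
      _ = E ^ (1 / p) * S ^ (1 / q) := by
          rw [tsum_congr h2, tsum_congr h3]
  -- deduce S ^ (1 - p) ≤ E
  have step : S ^ (-(1 / q)) ≤ E ^ (1 / p) := by
    calc S ^ (-(1 / q)) = S ^ (-(1 / q)) * 1 := (mul_one _).symm
      _ ≤ S ^ (-(1 / q)) * (E ^ (1 / p) * S ^ (1 / q)) := by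
          exact mul_le_mul_right key _
      _ = E ^ (1 / p) * (S ^ (-(1 / q)) * S ^ (1 / q)) := by ring
      _ = E ^ (1 / p) := by
          rw [← ENNReal.rpow_add _ _ hS0 hSt]
          simp
  have := ENNReal.rpow_le_rpow step hp0.le
  rw [← ENNReal.rpow_mul, ← ENNReal.rpow_mul] at this
  rw [show (1 / p) * p = 1 by field_simp, ENNReal.rpow_one] at this
  rw [show (-(1 / q)) * p = 1 - p by rw [hq]; field_simp; ring] at this
  exact this

/-- The radially symmetric `p`-modulus `M_p(σ, s)` of the family of infinite
descending paths in a radially symmetric infinite tree whose `k`-th shell has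
`s k` edges, each of weight `σ k`: the infimum of the `p`-energies
`Σ_k s_k σ_k ρ_k^p` over all densities `ρ` with `Σ_k ρ_k ≥ 1`. -/
noncomputable def Mmod (p : ℝ) (σ : ℕ → ℝ≥0) (s : ℕ → ℕ) : ℝ≥0∞ :=
  ⨅ ρ ∈ {ρ : ℕ → ℝ≥0 | 1 ≤ ∑' k : ℕ, (ρ k : ℝ≥0∞)},
    ∑' k : ℕ, (s k : ℝ≥0∞) * (σ k : ℝ≥0∞) * (ρ k : ℝ≥0∞) ^ p

/-- the infimum defining `M_p(σ, s)` is attained iff `M_p(σ, s) > 0`. -/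
theorem stmt5 (p : ℝ) (hp : 1 < p)
    (s : ℕ → ℕ) (hs : ∀ k, 1 ≤ s k) (σ : ℕ → ℝ≥0) (hσ : ∀ k, 0 < σ k) :
    (∃ ρ : ℕ → ℝ≥0, 1 ≤ (∑' k : ℕ, (ρ k : ℝ≥0∞)) ∧
        (∑' k : ℕ, (s k : ℝ≥0∞) * (σ k : ℝ≥0∞) * (ρ k : ℝ≥0∞) ^ p) = Mmod p σ s) ↔
      0 < Mmod p σ s := by
  have hp0 : (0 : ℝ) < p := by linarith
  have hp1 : p - 1 ≠ 0 := by intro h; nlinarith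
  set w : ℕ → ℝ≥0∞ := fun k => (s k : ℝ≥0∞) * (σ k : ℝ≥0∞) with hw
  have hw0 : ∀ k, w k ≠ 0 := by
    intro k
    simp only [hw, mul_ne_zero_iff, Nat.cast_ne_zero, ENNReal.coe_ne_zero]
    exact ⟨by have := hs k; omega, (hσ k).ne'⟩
  have hwt : ∀ k, w k ≠ ⊤ := by
    intro k
    simp [hw, ENNReal.mul_ne_top, ENNReal.natCast_ne_top]
  set a : ℕ → ℝ≥0∞ := fun k => w k ^ (-(p - 1)⁻¹) with ha
  have ha0 : ∀ k, a k ≠ 0 := by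
    intro k
    simp [ha, ENNReal.rpow_eq_zero_iff, hw0 k, hwt k]
  have hat : ∀ k, a k ≠ ⊤ := by
    intro k
    simp [ha, ENNReal.rpow_eq_top_iff, hw0 k, hwt k]
  have hkey : ∀ k, w k * a k ^ p = a k := by
    intro k
    simp only [ha]
    have h2 : (p - 1) * (p - 1)⁻¹ = 1 := mul_inv_cancel₀ hp1
    calc w k * (w k ^ (-(p - 1)⁻¹)) ^ p
        = w k ^ (1 : ℝ) * w k ^ (-(p - 1)⁻¹ * p) := by
          rw [ENNReal.rpow_one, ← ENNReal.rpow_mul]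
      _ = w k ^ ((1 : ℝ) + -(p - 1)⁻¹ * p) :=
          (ENNReal.rpow_add _ _ (hw0 k) (hwt k)).symm
      _ = w k ^ (-(p - 1)⁻¹) := by
          congr 1
          linear_combination -h2
  -- Mmod ≤ energy of any admissible density
  have hMle : ∀ ρ : ℕ → ℝ≥0, 1 ≤ (∑' k : ℕ, (ρ k : ℝ≥0∞)) →
      Mmod p σ s ≤ ∑' k : ℕ, w k * (ρ k : ℝ≥0∞) ^ p := by
    intro ρ hρ
    exact iInf₂_le ρ hρ
  constructor
  · -- attained → positive
    rintro ⟨ρ, hρ1, hρ2⟩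
    rw [pos_iff_ne_zero]
    intro hM
    rw [hM, ENNReal.tsum_eq_zero] at hρ2
    have : ∀ k, ρ k = 0 := by
      intro k
      have h := hρ2 k
      rcases mul_eq_zero.mp h with h' | h'
      · exact absurd h' (hw0 k)
      · have := (ENNReal.rpow_eq_zero_iff.mp h')
        rcases this with ⟨h1, _⟩ | ⟨h1, h2⟩
        · exact_mod_cast h1
        · exact absurd h1 (by simp)
    simp [this] at hρ1
  · -- positive → attained
    intro hM
    set S : ℝ≥0∞ := ∑' k, a k with hS
    have hS0 : S ≠ 0 := by
      rw [hS, ne_eq, ENNReal.tsum_eq_zero]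
      push_neg
      exact ⟨0, ha0 0⟩
    -- First: S ≠ ⊤, otherwise Mmod = 0.
    have hSt : S ≠ ⊤ := by
      intro hStop
      -- antitonicity of x ↦ x ^ (1 - p)
      have anti : ∀ x y : ℝ≥0∞, x ≤ y → y ^ (1 - p) ≤ x ^ (1 - p) := by
        intro x y hxy
        rw [show (1 - p : ℝ) = -(p - 1) by ring, ENNReal.rpow_neg, ENNReal.rpow_neg]
        exact ENNReal.inv_le_inv.mpr (ENNReal.rpow_le_rpow hxy (by linarith))
      -- Mmod ≤ δ for every positive finite δ
      have hsmall : ∀ δ : ℝ≥0∞, δ ≠ 0 → δ ≠ ⊤ → Mmod p σ s ≤ δ := by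
        intro δ hδ0 hδt
        set x : ℝ≥0∞ := δ ^ (1 / (1 - p)) with hx
        have hx0 : x ≠ 0 := by
          simp [hx, ENNReal.rpow_eq_zero_iff, hδ0, hδt]
        have hxt : x ≠ ⊤ := by
          simp [hx, ENNReal.rpow_eq_top_iff, hδ0, hδt]
        -- find a finset with partial sum > x
        have hlt : x < ⨆ (F : Finset ℕ), ∑ k ∈ F, a k := by
          rw [← ENNReal.tsum_eq_iSup_sum, ← hS, hStop]
          exact hxt.lt_top
        obtain ⟨F, hF⟩ := lt_iSup_iff.mp hlt
        set b : ℕ → ℝ≥0∞ := fun k => if k ∈ F then a k else 0 with hb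
        have hbsum : (∑' k, b k) = ∑ k ∈ F, a k := by
          rw [tsum_eq_sum (s := F) (by intro k hk; simp [hb, hk])]
          exact Finset.sum_congr rfl fun k hk => by simp [hb, hk]
        have hT0 : (∑' k, b k) ≠ 0 := by
          rw [hbsum]; exact (lt_of_le_of_lt (zero_le (a := x)) hF).ne'
        have hTt : (∑' k, b k) ≠ ⊤ := by
          rw [hbsum]
          exact (ENNReal.sum_lt_top.mpr fun k _ => (hat k).lt_top).ne
        have hwb : ∀ k, w k * b k ^ p = b k := by
          intro k
          by_cases hk : k ∈ F
          · simp only [hb, if_pos hk]; exact hkey k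
          · simp [hb, if_neg hk, ENNReal.zero_rpow_of_pos hp0]
        have hbt : ∀ k, b k ≠ ⊤ := by
          intro k
          by_cases hk : k ∈ F <;> simp [hb, hk, hat k]
        obtain ⟨ρ, h1, h2⟩ := construct_aux hp0 w b hwb hbt hT0 hTt
        calc Mmod p σ s ≤ ∑' k : ℕ, w k * (ρ k : ℝ≥0∞) ^ p := hMle ρ h1
          _ = (∑' k, b k) ^ (1 - p) := h2
          _ ≤ x ^ (1 - p) := anti _ _ (by rw [hbsum]; exact hF.le)
          _ = δ := by
              rw [hx, ← ENNReal.rpow_mul]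
              rw [show (1 / (1 - p)) * (1 - p) = 1 by
                    have h1p : (1:ℝ) - p ≠ 0 := by intro h; nlinarith
                    field_simp, ENNReal.rpow_one]
        -- done
      -- contradiction with hM : 0 < Mmod
      by_cases hMt : Mmod p σ s = ⊤
      · have := hsmall 1 one_ne_zero (by simp)
        rw [hMt] at this
        simp at this
      · have h2 := hsmall (Mmod p σ s / 2) (by simp [hM.ne', ENNReal.div_eq_zero_iff])
          (by simp [ENNReal.div_eq_top, hMt])
        have := ENNReal.half_lt_self hM.ne' hMt
        exact absurd h2 (not_le.mpr this)
    -- Now S is finite: construct the extremal density.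
    obtain ⟨ρ, h1, h2⟩ := construct_aux hp0 w a hkey hat hS0 hSt
    have hge : S ^ (1 - p) ≤ Mmod p σ s := by
      apply le_iInf₂
      intro ρ' hρ'
      exact lower_bound hp w hw0 hwt hS0 hSt (fun k => (ρ' k : ℝ≥0∞)) hρ'
    have hle : Mmod p σ s ≤ S ^ (1 - p) := h2 ▸ hMle ρ h1
    exact ⟨ρ, h1, h2.trans (le_antisymm hle hge).symm⟩
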